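/- There exists an allocation instance with an epistemic-envy-free (EEF) allocation but no iEF lottery. Specifically, for the instance with 3 agents and 4 items where v_1 = (4/10, 3/10, 3/10, 0), v_2 = (4/10, 3/10, 3/10, 0), v_3 = (0, 3/10, 3/10, 4/10) over items (a,b,c,d): the allocation ({a}, {b,c}, {d}) is EEF, but no iEF lottery exists. -/

import Mathlib

open Finset

/-- Value of agent `i` for a bundle `S` of items (additive valuations). -/
def bundleVal {n m : ℕ} (v : Fin n → Fin m → ℝ) (i : Fin n) (S : Finset (Fin m)) : ℝ :=
  ∑ j ∈ S, v i j

/-- Probability that agent `i` receives bundle `S` under lottery `x`. -/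
def prBundle {n m : ℕ} (x : (Fin n → Finset (Fin m)) → ℝ) (i : Fin n) (S : Finset (Fin m)) : ℝ :=
  ∑ a ∈ Finset.univ.filter (fun a => a i = S), x a

/-- Interim envy-freeness: for all `i ≠ k` and every bundle `S` received with positive
probability, `v_i(S) ≥ E[v_i(A_k) | A_i = S]` (stated multiplied through by the
positive probability `Pr[A_i = S]`). -/
def IEF {n m : ℕ} (v : Fin n → Fin m → ℝ) (x : (Fin n → Finset (Fin m)) → ℝ) : Prop :=
  ∀ i k : Fin n, i ≠ k → ∀ S : Finset (Fin m), 0 < prBundle x i S →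
    (∑ a ∈ Finset.univ.filter (fun a => a i = S), x a * bundleVal v i (a k))
      ≤ bundleVal v i S * prBundle x i S

/-- An allocation is a partition of the items into bundles, one per agent. -/
def IsPartition {n m : ℕ} (a : Fin n → Finset (Fin m)) : Prop :=
  (∀ i k : Fin n, i ≠ k → Disjoint (a i) (a k)) ∧ ∀ j : Fin m, ∃ i, j ∈ a i
/-- Valuations of the instance: items (a,b,c,d) = (0,1,2,3). -/
noncomputable def v8 : Fin 3 → Fin 4 → ℝ :=
  ![![4/10, 3/10, 3/10, 0], ![4/10, 3/10, 3/10, 0], ![0, 3/10, 3/10, 4/10]]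

/-- The allocation ({a}, {b,c}, {d}). -/
def A8 : Fin 3 → Finset (Fin 4) := ![{0}, {1, 2}, {3}]



def B8 : Fin 3 → Finset (Fin 4) := ![{1, 2}, {0}, {3}]

def w8 : Fin 3 → Fin 4 → ℕ := ![![4,3,3,0], ![4,3,3,0], ![0,3,3,4]]

set_option maxRecDepth 10000 in
theorem classify8 : ∀ f : Fin 4 → Fin 3,
    (∀ i, 10 ≤ 3 * ∑ j ∈ Finset.univ.filter (fun j => f j = i), w8 i j) →
    (fun i => Finset.univ.filter (fun j => f j = i)) = A8 ∨
    (fun i => Finset.univ.filter (fun j => f j = i)) = B8 := by decide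

lemma part_fun8 {a : Fin 3 → Finset (Fin 4)} (ha : IsPartition a) :
    ∃ f : Fin 4 → Fin 3, ∀ i, a i = Finset.univ.filter (fun j => f j = i) := by
  choose f hf using ha.2
  refine ⟨f, fun i => ?_⟩
  ext j
  simp only [Finset.mem_filter, Finset.mem_univ, true_and]
  constructor
  · intro hj
    by_contra hne
    exact (Finset.disjoint_left.1 (ha.1 (f j) i hne)) (hf j) hj
  · intro h
    exact h ▸ hf j

lemma hv8 : ∀ i j, v8 i j = (w8 i j : ℝ) / 10 := by
  intro i j
  fin_cases i <;> fin_cases j <;> norm_num [v8, w8]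

lemma hbv8 (i : Fin 3) (S : Finset (Fin 4)) :
    bundleVal v8 i S = (∑ j ∈ S, (w8 i j : ℝ)) / 10 := by
  simp [bundleVal, hv8, Finset.sum_div]

lemma bval_nat (i : Fin 3) (S : Finset (Fin 4)) :
    bundleVal v8 i S = ((∑ j ∈ S, w8 i j : ℕ) : ℝ) / 10 := by
  rw [hbv8]; norm_num

lemma htot8 (i : Fin 3) : ∑ j : Fin 4, v8 i j = 1 := by
  fin_cases i <;> norm_num [v8, Fin.sum_univ_succ]

lemma partsum8 {a : Fin 3 → Finset (Fin 4)} (ha : IsPartition a) (i : Fin 3) :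
    bundleVal v8 i (a 0) + bundleVal v8 i (a 1) + bundleVal v8 i (a 2) = 1 := by
  have huniv : (Finset.univ : Finset (Fin 4)) = Finset.univ.biUnion a := by
    ext j
    simpa using ha.2 j
  have hdisj : ((Finset.univ : Finset (Fin 3)) : Set (Fin 3)).PairwiseDisjoint a := by
    intro i hi k hk hik
    exact ha.1 i k hik
  have h1 : ∑ j : Fin 4, v8 i j = ∑ k : Fin 3, ∑ j ∈ a k, v8 i j := by
    rw [huniv]
    exact Finset.sum_biUnion hdisj
  rw [htot8 i, Fin.sum_univ_three] at h1
  simp only [bundleVal]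
  linarith

/-- the allocation ({a},{b,c},{d}) is epistemic-envy-free, yet the instance
admits no iEF lottery. -/
theorem EEF_without_iEF :
    IsPartition A8 ∧
    (∀ i : Fin 3, ∃ B : Fin 3 → Finset (Fin 4), IsPartition B ∧ B i = A8 i ∧
      ∀ j : Fin 3, bundleVal v8 i (B j) ≤ bundleVal v8 i (A8 i)) ∧
    (∀ x : (Fin 3 → Finset (Fin 4)) → ℝ,
      (∀ a, 0 ≤ x a) → (∑ a, x a = 1) → (∀ a, 0 < x a → IsPartition a) →
      IEF v8 x → False) := by
  refine ⟨by unfold IsPartition; decide, ?_, ?_⟩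
  · -- EEF
    intro i
    fin_cases i
    · refine ⟨![{0}, {1}, {2, 3}], by unfold IsPartition; decide, by decide, ?_⟩
      intro j
      fin_cases j <;>
        simp only [bval_nat] <;>
        rw [div_le_div_iff_of_pos_right (by norm_num : (0:ℝ) < 10), Nat.cast_le] <;>
        decide
    · refine ⟨A8, by unfold IsPartition; decide, rfl, ?_⟩
      intro j
      fin_cases j <;>
        simp only [bval_nat] <;>
        rw [div_le_div_iff_of_pos_right (by norm_num : (0:ℝ) < 10), Nat.cast_le] <;>
        decide
    · refine ⟨![{0, 1}, {2}, {3}], by unfold IsPartition; decide, by decide, ?_⟩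
      intro j
      fin_cases j <;>
        simp only [bval_nat] <;>
        rw [div_le_div_iff_of_pos_right (by norm_num : (0:ℝ) < 10), Nat.cast_le] <;>
        decide
  · -- no iEF lottery
    intro x hx hsum hpart hief
    -- support of x consists of A8 and B8
    have hAB : ∀ a, 0 < x a → a = A8 ∨ a = B8 := by
      intro a0 ha0
      have hprop : ∀ i : Fin 3, (1 : ℝ) / 3 ≤ bundleVal v8 i (a0 i) := by
        intro i
        set S := a0 i with hS
        set F := Finset.univ.filter (fun a : Fin 3 → Finset (Fin 4) => a i = S) with hF
        have hmem : a0 ∈ F := by simp [hF, hS]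
        have hpr : 0 < prBundle x i S :=
          lt_of_lt_of_le ha0 (Finset.single_le_sum (fun a _ => hx a) hmem)
        set P := prBundle x i S with hP
        have e0 : ∑ a ∈ F, x a * bundleVal v8 i (a i) = bundleVal v8 i S * P := by
          rw [hP, prBundle, Finset.mul_sum]
          refine Finset.sum_congr rfl (fun a ha => ?_)
          have : a i = S := (Finset.mem_filter.1 ha).2
          rw [this, mul_comm]
        have hle : ∀ k : Fin 3,
            ∑ a ∈ F, x a * bundleVal v8 i (a k) ≤ bundleVal v8 i S * P := by
          intro k
          by_cases hik : i = k
          · exact le_of_eq (hik ▸ e0)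
          · exact hief i k hik S hpr
        have hsplit : ∑ a ∈ F, x a * bundleVal v8 i (a 0)
            + ∑ a ∈ F, x a * bundleVal v8 i (a 1)
            + ∑ a ∈ F, x a * bundleVal v8 i (a 2) = P := by
          rw [← Finset.sum_add_distrib, ← Finset.sum_add_distrib]
          rw [hP, prBundle]
          refine Finset.sum_congr rfl (fun a ha => ?_)
          rcases eq_or_lt_of_le (hx a) with h0 | h0
          · rw [← h0]; ring
          · have hp := partsum8 (hpart a h0) i
            nlinarith [hp]
        have hP3 : P ≤ 3 * (bundleVal v8 i S * P) := by
          have := hle 0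
          have := hle 1
          have := hle 2
          linarith
        nlinarith [hpr, hP3]
      have hnat : ∀ i : Fin 3, 10 ≤ 3 * ∑ j ∈ a0 i, w8 i j := by
        intro i
        have h := hprop i
        rw [hbv8] at h
        have h2 : (10 : ℝ) ≤ 3 * ∑ j ∈ a0 i, (w8 i j : ℝ) := by linarith
        exact_mod_cast h2
      obtain ⟨f, hf⟩ := part_fun8 (hpart a0 ha0)
      have ha0eq : a0 = fun i => Finset.univ.filter (fun j => f j = i) := funext hf
      rw [ha0eq]
      apply classify8
      intro i
      have := hnat i
      rwa [ha0eq] at this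
    -- hence x A8 + x B8 = 1
    have hsum2 : x A8 + x B8 = 1 := by
      have hsub : ∑ a ∈ ({A8, B8} : Finset (Fin 3 → Finset (Fin 4))), x a = ∑ a, x a := by
        refine Finset.sum_subset (Finset.subset_univ _) (fun a _ hna => ?_)
        by_contra h
        rcases hAB a (lt_of_le_of_ne (hx a) (Ne.symm h)) with h1 | h1 <;>
          simp [h1] at hna
      rw [Finset.sum_pair (by decide : A8 ≠ B8), hsum] at hsub
      exact hsub
    -- helper for extracting single terms
    have hval01 : bundleVal v8 0 ({1, 2} : Finset (Fin 4)) = 6 / 10 := by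
      rw [bval_nat, show (∑ j ∈ ({1, 2} : Finset (Fin 4)), w8 0 j) = 6 from by decide]
      norm_num
    have hval00 : bundleVal v8 0 ({0} : Finset (Fin 4)) = 4 / 10 := by
      rw [bval_nat, show (∑ j ∈ ({0} : Finset (Fin 4)), w8 0 j) = 4 from by decide]
      norm_num
    have hval11 : bundleVal v8 1 ({1, 2} : Finset (Fin 4)) = 6 / 10 := by
      rw [bval_nat, show (∑ j ∈ ({1, 2} : Finset (Fin 4)), w8 1 j) = 6 from by decide]
      norm_num
    have hval10 : bundleVal v8 1 ({0} : Finset (Fin 4)) = 4 / 10 := by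
      rw [bval_nat, show (∑ j ∈ ({0} : Finset (Fin 4)), w8 1 j) = 4 from by decide]
      norm_num
    rcases (hx A8).lt_or_eq with hp | hp
    · -- x A8 > 0 : agent 0 with S = {0}, envies agent 1
      set F := Finset.univ.filter (fun a : Fin 3 → Finset (Fin 4) => a 0 = ({0} : Finset (Fin 4))) with hF
      have hmemA : A8 ∈ F := by simp [hF]; decide
      have hzero : ∀ a ∈ F, a ≠ A8 → x a = 0 := by
        intro a ha hne
        by_contra h
        rcases hAB a (lt_of_le_of_ne (hx a) (Ne.symm h)) with h1 | h1
        · exact hne h1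
        · have := (Finset.mem_filter.1 ha).2
          rw [h1] at this
          exact absurd this (by decide)
      have hprA : prBundle x 0 {0} = x A8 := by
        rw [prBundle]
        exact Finset.sum_eq_single_of_mem A8 hmemA (fun a ha hne => hzero a ha hne)
      have hpr : 0 < prBundle x 0 {0} := by rw [hprA]; exact hp
      have h := hief 0 1 (by decide) {0} hpr
      have hsumE : ∑ a ∈ F, x a * bundleVal v8 0 (a 1) = x A8 * bundleVal v8 0 (A8 1) := by
        exact Finset.sum_eq_single_of_mem A8 hmemA
          (fun a ha hne => by rw [hzero a ha hne, zero_mul])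
      rw [← hF] at h
      rw [hsumE, hprA] at h
      have hA81 : A8 1 = ({1, 2} : Finset (Fin 4)) := by decide
      rw [hA81, hval01, hval00] at h
      linarith
    · -- x B8 > 0 : agent 1 with S = {0}, envies agent 0
      have hq : 0 < x B8 := by linarith
      set F := Finset.univ.filter (fun a : Fin 3 → Finset (Fin 4) => a 1 = ({0} : Finset (Fin 4))) with hF
      have hmemB : B8 ∈ F := by simp [hF]; decide
      have hzero : ∀ a ∈ F, a ≠ B8 → x a = 0 := by
        intro a ha hne
        by_contra h
        rcases hAB a (lt_of_le_of_ne (hx a) (Ne.symm h)) with h1 | h1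
        · have := (Finset.mem_filter.1 ha).2
          rw [h1] at this
          exact absurd this (by decide)
        · exact hne h1
      have hprB : prBundle x 1 {0} = x B8 := by
        rw [prBundle]
        exact Finset.sum_eq_single_of_mem B8 hmemB (fun a ha hne => hzero a ha hne)
      have hpr : 0 < prBundle x 1 {0} := by rw [hprB]; exact hq
      have h := hief 1 0 (by decide) {0} hpr
      have hsumE : ∑ a ∈ F, x a * bundleVal v8 1 (a 0) = x B8 * bundleVal v8 1 (B8 0) := by
        exact Finset.sum_eq_single_of_mem B8 hmemB
          (fun a ha hne => by rw [hzero a ha hne, zero_mul])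
      rw [← hF] at h
      rw [hsumE, hprB] at h
      have hB80 : B8 0 = ({1, 2} : Finset (Fin 4)) := by decide
      rw [hB80, hval11, hval10] at h
      linarith
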